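/- Under the hypotheses of the main coincidence theorem (Ψ a ψ-covering, Φ C¹ with ‖Φ(x₀) − Ψ(x₀)‖ ≤ φ(τ₀) − ψ(τ₀) and ‖Φ'(x)‖ ≤ φ'(τ) whenever ‖x − x₀‖ ≤ τ − τ₀), and given an increasing sequence (τⱼ) ⊂ [τ₀, τ*] with ψ(τⱼ₊₁) = φ(τⱼ), there exists a sequence (xⱼ) in X with x₀ the given base point, ‖xⱼ − x₀‖ ≤ τⱼ − τ₀, ‖xⱼ₊₁ − xⱼ‖ ≤ τⱼ₊₁ − τⱼ, and Ψ(xⱼ₊₁) = Φ(xⱼ) for all j. -/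

import Mathlib

open Metric

/-- The key lemma of the paper: under the hypotheses of the main coincidence theorem,
given a strictly increasing sequence `(τⱼ)` in `[τ₀, τ*)` with `ψ(τⱼ₊₁) = φ(τⱼ)`,
there is a sequence `(xⱼ)` with `x 0 = x₀`, `‖xⱼ − x₀‖ ≤ τⱼ − τ₀`,
`‖xⱼ₊₁ − xⱼ‖ ≤ τⱼ₊₁ − τⱼ`, and `Ψ(xⱼ₊₁) = Φ(xⱼ)`. Here `r ∈ (0, ∞]` is `r : ENNReal`. -/
theorem x_sequence_exists
    {X Y : Type*} [NormedAddCommGroup X] [NormedSpace ℝ X] [CompleteSpace X]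
    [NormedAddCommGroup Y] [NormedSpace ℝ Y] [CompleteSpace Y]
    (x₀ : X) (r : ENNReal) (hr : 0 < r) (τ₀ : ℝ)
    (ψ φ : ℝ → ℝ) (φ' : ℝ → ℝ)
    (Ψ Φ : X → Y) (Φ' : X → X →L[ℝ] Y)
    (hψcont : ContinuousOn ψ {τ | τ₀ ≤ τ ∧ ENNReal.ofReal (τ - τ₀) < r})
    (hψmono : MonotoneOn ψ {τ | τ₀ ≤ τ ∧ ENNReal.ofReal (τ - τ₀) < r})
    (hΨcont : ContinuousOn Ψ {x | ENNReal.ofReal ‖x - x₀‖ < 2 * r})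
    (hΨcover : ∀ τ' τ'' : ℝ, τ₀ ≤ τ' → τ' < τ'' → ENNReal.ofReal (τ'' - τ₀) < r →
      ∀ x' : X, ENNReal.ofReal ‖x' - x₀‖ < r →
        closedBall (Ψ x') (ψ τ'' - ψ τ') ⊆ Ψ '' closedBall x' (τ'' - τ'))
    (hΦderiv : ∀ x : X, ENNReal.ofReal ‖x - x₀‖ < r → HasFDerivAt Φ (Φ' x) x)
    (hΦ'cont : ContinuousOn Φ' {x | ENNReal.ofReal ‖x - x₀‖ < r})
    (hφderiv : ∀ τ : ℝ, τ₀ ≤ τ → ENNReal.ofReal (τ - τ₀) < r → HasDerivAt φ (φ' τ) τ)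
    (hφmono : StrictMonoOn φ {τ | τ₀ ≤ τ ∧ ENNReal.ofReal (τ - τ₀) < r})
    (hinit : ‖Φ x₀ - Ψ x₀‖ ≤ φ τ₀ - ψ τ₀)
    (hbound : ∀ τ : ℝ, τ₀ ≤ τ → ENNReal.ofReal (τ - τ₀) < r →
      ∀ x : X, ‖x - x₀‖ ≤ τ - τ₀ → ‖Φ' x‖ ≤ φ' τ)
    (τ_star : ℝ) (hτr : ENNReal.ofReal (τ_star - τ₀) < r)
    (τ : ℕ → ℝ) (hτ0 : τ 0 = τ₀) (hτmono : StrictMono τ)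
    (hτmem : ∀ j, τ j ∈ Set.Ico τ₀ τ_star)
    (hτrec : ∀ j, ψ (τ (j + 1)) = φ (τ j)) :
    ∃ x : ℕ → X, x 0 = x₀ ∧
      (∀ j, ‖x j - x₀‖ ≤ τ j - τ₀) ∧
      (∀ j, ‖x (j + 1) - x j‖ ≤ τ (j + 1) - τ j) ∧
      (∀ j, Ψ (x (j + 1)) = Φ (x j)) := by

  classical
  -- basic facts about τ
  have hτ₀le : ∀ j, τ₀ ≤ τ j := fun j => (hτmem j).1
  have hτlt : ∀ j, ENNReal.ofReal (τ j - τ₀) < r := fun j =>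
    lt_of_le_of_lt (ENNReal.ofReal_le_ofReal (by linarith [(hτmem j).2])) hτr
  -- the inductive invariant
  set Inv : ℕ → X → Prop := fun j y =>
    ‖y - x₀‖ ≤ τ j - τ₀ ∧ ‖Φ y - Ψ y‖ ≤ φ (τ j) - ψ (τ j) with hInv
  -- the key step
  have step : ∀ j (y : X), Inv j y → ∃ z : X, Inv (j + 1) z ∧
      ‖z - y‖ ≤ τ (j + 1) - τ j ∧ Ψ z = Φ y := by
    intro j y ⟨hy1, hy2⟩
    have hjlt : τ j < τ (j + 1) := hτmono (Nat.lt_succ_self j)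
    have hyofr : ENNReal.ofReal ‖y - x₀‖ < r :=
      lt_of_le_of_lt (ENNReal.ofReal_le_ofReal hy1) (hτlt j)
    have hmem : Φ y ∈ closedBall (Ψ y) (ψ (τ (j + 1)) - ψ (τ j)) := by
      rw [mem_closedBall, dist_eq_norm, hτrec j]
      exact hy2
    obtain ⟨z, hzball, hzeq⟩ :=
      hΨcover (τ j) (τ (j + 1)) (hτ₀le j) hjlt (hτlt (j + 1)) y hyofr hmem
    rw [mem_closedBall, dist_eq_norm] at hzball
    have hz0 : ‖z - x₀‖ ≤ τ (j + 1) - τ₀ := by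
      calc ‖z - x₀‖ ≤ ‖z - y‖ + ‖y - x₀‖ := norm_sub_le_norm_sub_add_norm_sub z y x₀
        _ ≤ (τ (j + 1) - τ j) + (τ j - τ₀) := add_le_add hzball hy1
        _ = τ (j + 1) - τ₀ := by ring
    -- the mean value estimate: ‖Φ z - Φ y‖ ≤ φ (τ (j+1)) - φ (τ j)
    set u : ℝ → X := fun t => y + t • (z - y) with hu
    set σ : ℝ → ℝ := fun t => τ j + t * (τ (j + 1) - τ j) with hσ
    have hσmem : ∀ t ∈ Set.Icc (0 : ℝ) 1, τ₀ ≤ σ t ∧ ENNReal.ofReal (σ t - τ₀) < r := by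
      intro t ht
      have h1 : τ₀ ≤ σ t := by
        have : 0 ≤ t * (τ (j + 1) - τ j) := mul_nonneg ht.1 (by linarith)
        simp only [hσ]; linarith [hτ₀le j]
      have h2 : σ t ≤ τ (j + 1) := by
        have : t * (τ (j + 1) - τ j) ≤ 1 * (τ (j + 1) - τ j) :=
          mul_le_mul_of_nonneg_right ht.2 (by linarith)
        simp only [hσ]; linarith
      exact ⟨h1, lt_of_le_of_lt (ENNReal.ofReal_le_ofReal (by linarith)) (hτlt (j + 1))⟩
    have humem : ∀ t ∈ Set.Icc (0 : ℝ) 1, ‖u t - x₀‖ ≤ σ t - τ₀ := by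
      intro t ht
      calc ‖u t - x₀‖ = ‖(y - x₀) + t • (z - y)‖ := by
            simp only [hu]; rw [add_sub_right_comm]
        _ ≤ ‖y - x₀‖ + ‖t • (z - y)‖ := norm_add_le _ _
        _ ≤ (τ j - τ₀) + t * (τ (j + 1) - τ j) := by
            refine add_le_add hy1 ?_
            rw [norm_smul, Real.norm_eq_abs, abs_of_nonneg ht.1]
            exact mul_le_mul_of_nonneg_left hzball ht.1
        _ = σ t - τ₀ := by simp only [hσ]; ring
    have huderiv : ∀ t ∈ Set.Icc (0 : ℝ) 1,
        HasDerivAt (fun s => Φ (u s)) (Φ' (u t) (z - y)) t := by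
      intro t ht
      have h1 : HasDerivAt u (z - y) t := by
        simpa [hu] using ((hasDerivAt_id t).smul_const (z - y)).const_add y
      have h2 : HasFDerivAt Φ (Φ' (u t)) (u t) := by
        refine hΦderiv (u t) ?_
        exact lt_of_le_of_lt (ENNReal.ofReal_le_ofReal (humem t ht)) (hσmem t ht).2
      exact h2.comp_hasDerivAt t h1
    have hBderiv : ∀ t ∈ Set.Icc (0 : ℝ) 1,
        HasDerivAt (fun s => φ (σ s) - φ (τ j)) (φ' (σ t) * (τ (j + 1) - τ j)) t := by
      intro t ht
      have h1 : HasDerivAt σ (τ (j + 1) - τ j) t := by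
        simpa [hσ] using ((hasDerivAt_id t).mul_const (τ (j + 1) - τ j)).const_add (τ j)
      have h2 : HasDerivAt φ (φ' (σ t)) (σ t) := hφderiv (σ t) (hσmem t ht).1 (hσmem t ht).2
      exact ((h2.comp t h1)).sub_const (φ (τ j))
    have hMVT : ‖Φ z - Φ y‖ ≤ φ (τ (j + 1)) - φ (τ j) := by
      have key := image_norm_le_of_norm_deriv_right_le_deriv_boundary'
        (f := fun s => Φ (u s) - Φ y) (a := 0) (b := 1)
        (f' := fun t => Φ' (u t) (z - y))
        (B := fun s => φ (σ s) - φ (τ j)) (B' := fun t => φ' (σ t) * (τ (j + 1) - τ j))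
        (fun t ht => (((huderiv t ht).sub_const (Φ y)).continuousAt).continuousWithinAt)
        (fun t ht => (((huderiv t (Set.mem_Icc_of_Ico ht)).sub_const
            (Φ y)).hasDerivWithinAt).mono (Set.Ici_subset_Ici.mpr le_rfl |>.trans fun _ h => h))
        (by simp only [hu, hσ]; norm_num)
        (fun t ht => ((hBderiv t ht).continuousAt).continuousWithinAt)
        (fun t ht => ((hBderiv t (Set.mem_Icc_of_Ico ht)).hasDerivWithinAt))
        (by
          intro t ht
          have ht' := Set.mem_Icc_of_Ico ht
          calc ‖Φ' (u t) (z - y)‖ ≤ ‖Φ' (u t)‖ * ‖z - y‖ := (Φ' (u t)).le_opNorm _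
            _ ≤ φ' (σ t) * (τ (j + 1) - τ j) := by
                have hb := hbound (σ t) (hσmem t ht').1 (hσmem t ht').2 (u t) (humem t ht')
                have hφ'nn : 0 ≤ φ' (σ t) :=
                  le_trans (norm_nonneg _) (hbound (σ t) (hσmem t ht').1 (hσmem t ht').2 x₀
                    (by simpa using (by linarith [(hσmem t ht').1] : (0:ℝ) ≤ σ t - τ₀)))
                exact mul_le_mul hb hzball (norm_nonneg _) hφ'nn)
      have := key (Set.right_mem_Icc.mpr zero_le_one)
      simp only [hu, hσ] at this
      norm_num at this
      convert this using 2 <;> ring_nf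
    refine ⟨z, ⟨hz0, ?_⟩, hzball, hzeq⟩
    calc ‖Φ z - Ψ z‖ = ‖Φ z - Φ y‖ := by rw [hzeq]
      _ ≤ φ (τ (j + 1)) - φ (τ j) := hMVT
      _ = φ (τ (j + 1)) - ψ (τ (j + 1)) := by rw [hτrec j]
  -- build the sequence by recursion
  have inv0 : Inv 0 x₀ := by
    constructor
    · simp [hτ0]
    · rw [hτ0]; exact hinit
  choose! fz hfz1 hfz2 hfz3 using step
  let F : ∀ j, {p : X // Inv j p} := fun j =>
    Nat.rec (motive := fun j => {p : X // Inv j p}) ⟨x₀, inv0⟩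
      (fun j y => ⟨fz j y.1, hfz1 j y.1 y.2⟩) j
  refine ⟨fun j => (F j).1, rfl, fun j => (F j).2.1, fun j => ?_, fun j => ?_⟩
  · exact hfz2 j (F j).1 (F j).2
  · exact hfz3 j (F j).1 (F j).2
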